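/- Let V be a module over a commutative ring with a basis indexed by pairs (n,k) of natural numbers, with basis elements B(n,k). Define a bilinear bracket on V by [B(n,k), B(N,K)] = (k*N - n*K) • B(n+N-1, k+K-1). Then this bracket is alternating (i.e. [x,x] = 0) and satisfies the Jacobi identity, so it defines a Lie algebra structure on V. -/

import Mathlib

/-- The canonical RPQWN bracket `[B^n_k, B^N_K] = (kN - nK) B^{n+N-1}_{k+K-1}`,
extended bilinearly to the free module with basis indexed by pairs `(n,k)` of
natural numbers, is alternating and satisfies the Jacobi identity. -/
theorem rpqwn_bracket_lie_algebra (R : Type*) [CommRing R]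
    (br : ((ℕ × ℕ) →₀ R) →ₗ[R] ((ℕ × ℕ) →₀ R) →ₗ[R] ((ℕ × ℕ) →₀ R))
    (hbr : ∀ n k N K : ℕ,
      br (Finsupp.single (n, k) 1) (Finsupp.single (N, K) 1)
        = ((k * N : ℤ) - (n * K : ℤ)) • Finsupp.single (n + N - 1, k + K - 1) (1 : R)) :
    (∀ x, br x x = 0) ∧
    (∀ x y z, br x (br y z) + br z (br x y) + br y (br z x) = 0) := by
  -- reduction lemma: a linear map vanishing on the basis vanishes
  have red : ∀ (φ : ((ℕ × ℕ) →₀ R) →ₗ[R] ((ℕ × ℕ) →₀ R)),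
      (∀ a : ℕ × ℕ, φ (Finsupp.single a 1) = 0) → ∀ x, φ x = 0 := by
    intro φ hφ x
    induction x using Finsupp.induction_linear with
    | zero => simp
    | add f g hf hg => simp [hf, hg]
    | single a r =>
        rw [show (Finsupp.single a r : (ℕ × ℕ) →₀ R) = r • Finsupp.single a 1 by
          simp [Finsupp.smul_single], map_smul, hφ, smul_zero]
  have hskew : ∀ a b : ℕ × ℕ,
      br (Finsupp.single a 1) (Finsupp.single b 1)
        + br (Finsupp.single b 1) (Finsupp.single a 1) = 0 := by
    rintro ⟨n, k⟩ ⟨N, K⟩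
    rw [hbr, hbr, show (N + n - 1, K + k - 1) = (n + N - 1, k + K - 1) by
      rw [Nat.add_comm N n, Nat.add_comm K k], ← add_smul,
      show ((k * N : ℤ) - (n * K : ℤ)) + ((K * n : ℤ) - (N * k : ℤ)) = 0 by ring, zero_smul]
  have hA1 : ∀ (a : ℕ × ℕ) y, br (Finsupp.single a 1) y + br y (Finsupp.single a 1) = 0 := by
    intro a y
    have := red (br (Finsupp.single a 1) + br.flip (Finsupp.single a 1))
      (fun b => by simpa using hskew a b) y
    simpa using this
  have hA : ∀ x y, br x y + br y x = 0 := by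
    intro x y
    have := red (br.flip y + br y) (fun a => by simpa using hA1 a y) x
    simpa using this
  constructor
  · intro x
    induction x using Finsupp.induction_linear with
    | zero => simp
    | add f g hf hg =>
        simp only [map_add, LinearMap.add_apply, hf, hg, add_zero, zero_add]
        have h := hA f g
        abel_nf at h ⊢
        exact h
    | single a r =>
        rcases a with ⟨n, k⟩
        rw [show (Finsupp.single ((n, k) : ℕ × ℕ) r : (ℕ × ℕ) →₀ R)
            = r • Finsupp.single (n, k) 1 by simp [Finsupp.smul_single],
          LinearMap.map_smul₂, map_smul, hbr,
          show ((k * n : ℤ) - (n * k : ℤ)) = 0 by ring]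
        simp
  · -- Jacobi identity
    have L1 : ∀ n k N K M L : ℕ,
        br (Finsupp.single (n, k) 1) (br (Finsupp.single (N, K) 1) (Finsupp.single (M, L) 1))
          = (((K : ℤ) * M - (N : ℤ) * L)
              * ((k : ℤ) * ((N : ℤ) + M - 1) - (n : ℤ) * ((K : ℤ) + L - 1)))
            • Finsupp.single (n + N + M - 2, k + K + L - 2) (1 : R) := by
      intro n k N K M L
      rw [hbr, map_zsmul, hbr, smul_smul]
      by_cases h : ((K : ℤ) * M - (N : ℤ) * L) = 0
      · rw [h]
        simp
      · have hNM : 1 ≤ N + M := by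
          by_contra hc
          have hN : N = 0 := by omega
          have hM : M = 0 := by omega
          apply h; subst hN; subst hM; push_cast; ring
        have hKL : 1 ≤ K + L := by
          by_contra hc
          have hK : K = 0 := by omega
          have hL : L = 0 := by omega
          apply h; subst hK; subst hL; push_cast; ring
        rw [show (n + (N + M - 1) - 1, k + (K + L - 1) - 1)
            = (n + N + M - 2, k + K + L - 2) by simp only [Prod.mk.injEq]; omega]
        have h1 : ((N + M - 1 : ℕ) : ℤ) = (N : ℤ) + M - 1 := by omega
        have h2 : ((K + L - 1 : ℕ) : ℤ) = (K : ℤ) + L - 1 := by omega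
        rw [h1, h2]
    have JB : ∀ (n k N K M L : ℕ),
        br (Finsupp.single (n, k) 1) (br (Finsupp.single (N, K) 1) (Finsupp.single (M, L) 1))
        + br (Finsupp.single (M, L) 1)
            (br (Finsupp.single (n, k) 1) (Finsupp.single (N, K) 1))
        + br (Finsupp.single (N, K) 1)
            (br (Finsupp.single (M, L) 1) (Finsupp.single (n, k) 1)) = 0 := by
      intro n k N K M L
      rw [L1 n k N K M L, L1 M L n k N K, L1 N K M L n k,
        show (M + n + N - 2, L + k + K - 2) = (n + N + M - 2, k + K + L - 2) by
          simp only [Prod.mk.injEq]; omega,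
        show (N + M + n - 2, K + L + k - 2) = (n + N + M - 2, k + K + L - 2) by
          simp only [Prod.mk.injEq]; omega,
        ← add_smul, ← add_smul]
      match_scalars
      ring
    -- basis version with pairs
    have JB' : ∀ a b c : ℕ × ℕ,
        br (Finsupp.single a 1) (br (Finsupp.single b 1) (Finsupp.single c 1))
        + br (Finsupp.single c 1) (br (Finsupp.single a 1) (Finsupp.single b 1))
        + br (Finsupp.single b 1) (br (Finsupp.single c 1) (Finsupp.single a 1)) = 0 := by
      rintro ⟨n, k⟩ ⟨N, K⟩ ⟨M, L⟩
      exact JB n k N K M L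
    -- reduce third argument
    have step3 : ∀ (a b : ℕ × ℕ) z,
        br (Finsupp.single a 1) (br (Finsupp.single b 1) z)
        + br z (br (Finsupp.single a 1) (Finsupp.single b 1))
        + br (Finsupp.single b 1) (br z (Finsupp.single a 1)) = 0 := by
      intro a b z
      have := red ((br (Finsupp.single a 1)).comp (br (Finsupp.single b 1))
          + br.flip (br (Finsupp.single a 1) (Finsupp.single b 1))
          + (br (Finsupp.single b 1)).comp (br.flip (Finsupp.single a 1)))
        (fun c => by simpa using JB' a b c) z
      simpa using this
    have step2 : ∀ (a : ℕ × ℕ) y z,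
        br (Finsupp.single a 1) (br y z)
        + br z (br (Finsupp.single a 1) y)
        + br y (br z (Finsupp.single a 1)) = 0 := by
      intro a y z
      have := red ((br (Finsupp.single a 1)).comp (br.flip z)
          + (br z).comp (br (Finsupp.single a 1))
          + br.flip (br z (Finsupp.single a 1)))
        (fun b => by simpa using step3 a b z) y
      simpa using this
    intro x y z
    have := red (br.flip (br y z)
        + (br z).comp (br.flip y)
        + (br y).comp (br z))
      (fun a => by simpa using step2 a y z) x
    simpa using this
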